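/- Let R be a commutative Von Neumann regular ring. Then an R-module M is Rad-supplementing if and only if M is injective. -/

import Mathlib

universe u v

/-- The radical of a module: the intersection of all maximal submodules. -/
def moduleRad (R : Type u) [Ring R] (M : Type v) [AddCommGroup M] [Module R M] :
    Submodule R M :=
  sInf {m : Submodule R M | IsCoatom m}

/-- `V` is a Rad-supplement of `U` in the ambient module: `U + V = ⊤` and
`U ⊓ V ≤ Rad V` (viewed inside the ambient module). -/
def IsRadSupplementOf (R : Type u) [Ring R] {N : Type v} [AddCommGroup N] [Module R N]
    (U V : Submodule R N) : Prop :=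
  U ⊔ V = ⊤ ∧ U ⊓ V ≤ Submodule.map V.subtype (moduleRad R V)

/-- `M` is Rad-supplementing: in every module containing it (i.e. every embedding into a
module `N`), its image has a Rad-supplement. -/
def IsRadSupplementing (R : Type u) [Ring R] (M : Type v) [AddCommGroup M] [Module R M] :
    Prop :=
  ∀ (N : ModuleCat.{v} R) (f : M →ₗ[R] N), Function.Injective f →
    ∃ V : Submodule R N, IsRadSupplementOf R (LinearMap.range f) V

section Aux

variable {R : Type u} [CommRing R]

/-- Over a von Neumann regular ring, if `m ∈ I • ⊤` then `m = e • m` for some `e ∈ I`. -/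
lemma exists_smul_eq_self_of_mem_smul_top
    {M : Type v} [AddCommGroup M] [Module R M]
    (hvnr : ∀ a : R, ∃ x : R, a = a * x * a)
    (I : Ideal R) {m : M} (hm : m ∈ I • (⊤ : Submodule R M)) :
    ∃ e ∈ I, e • m = m := by
  refine Submodule.smul_induction_on hm ?_ ?_
  · intro a ha n _
    obtain ⟨x, hx⟩ := hvnr a
    refine ⟨a * x, I.mul_mem_right x ha, ?_⟩
    rw [smul_smul, ← hx]
  · rintro m1 m2 ⟨e1, he1, h1⟩ ⟨e2, he2, h2⟩
    refine ⟨e1 + e2 - e1 * e2,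
      Submodule.sub_mem _ (Submodule.add_mem _ he1 he2) (I.mul_mem_right e2 he1), ?_⟩
    have g1 : (e1 + e2 - e1 * e2) • m1 = m1 := by
      rw [sub_smul, add_smul, mul_comm, mul_smul, h1]
      abel
    have g2 : (e1 + e2 - e1 * e2) • m2 = m2 := by
      rw [sub_smul, add_smul, mul_smul, h2]
      abel
    rw [smul_add, g1, g2]

/-- Over a commutative von Neumann regular ring, every module has zero radical. -/
lemma moduleRad_eq_bot_of_vnr (hvnr : ∀ a : R, ∃ x : R, a = a * x * a)
    (M : Type v) [AddCommGroup M] [Module R M] :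
    moduleRad R M = ⊥ := by
  rw [eq_bot_iff]
  intro m hm
  rw [Submodule.mem_bot]
  by_contra hm0
  set I : Ideal R := LinearMap.ker (LinearMap.toSpanSingleton R M m) with hIdef
  have hIne : I ≠ ⊤ := by
    intro h
    apply hm0
    have h1 : (1 : R) ∈ I := h ▸ Submodule.mem_top
    simpa [hIdef, LinearMap.mem_ker, LinearMap.toSpanSingleton_apply] using h1
  obtain ⟨J, hJmax, hIJ⟩ := Ideal.exists_le_maximal I hIne
  have hmJ : m ∉ (J • ⊤ : Submodule R M) := by
    intro h
    obtain ⟨e, heJ, hem⟩ := exists_smul_eq_self_of_mem_smul_top hvnr J h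
    have hsub : (1 : R) - e ∈ I := by
      simp [hIdef, LinearMap.mem_ker, LinearMap.toSpanSingleton_apply, sub_smul, hem]
    have h1 : (1 : R) ∈ J := by
      have := J.add_mem (hIJ hsub) heJ
      simpa using this
    exact hJmax.ne_top (Ideal.eq_top_of_isUnit_mem _ h1 isUnit_one)
  set S : Set (Submodule R M) := {N | (J • ⊤ : Submodule R M) ≤ N ∧ m ∉ N} with hSdef
  have hchain : ∀ c ⊆ S, IsChain (· ≤ ·) c → ∀ y ∈ c, ∃ ub ∈ S, ∀ z ∈ c, z ≤ ub := by
    intro c hcS hc y hy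
    refine ⟨sSup c, ⟨le_trans (hcS hy).1 (le_sSup hy), ?_⟩, fun z hz => le_sSup hz⟩
    intro hmem
    obtain ⟨z, hzc, hmz⟩ := (Submodule.mem_sSup_of_directed ⟨y, hy⟩ hc.directedOn).1 hmem
    exact (hcS hzc).2 hmz
  obtain ⟨N, -, hNmax⟩ := zorn_le_nonempty₀ S hchain (J • ⊤) ⟨le_rfl, hmJ⟩
  have hJN : (J • ⊤ : Submodule R M) ≤ N := hNmax.prop.1
  have hmN : m ∉ N := hNmax.prop.2
  have hsup : N ⊔ (R ∙ m) = ⊤ := by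
    rw [eq_top_iff]
    intro y _
    by_cases hyN : y ∈ N
    · exact Submodule.mem_sup_left hyN
    · have hy' : m ∈ N ⊔ (R ∙ y) := by
        by_contra hmNy
        have hS : N ⊔ (R ∙ y) ∈ S := ⟨le_trans hJN le_sup_left, hmNy⟩
        exact hyN ((hNmax.2 hS le_sup_left)
          (Submodule.mem_sup_right (Submodule.mem_span_singleton_self y)))
      obtain ⟨n, hn, z, hz, hnz⟩ := Submodule.mem_sup.1 hy'
      obtain ⟨a, rfl⟩ := Submodule.mem_span_singleton.1 hz
      have haJ : a ∉ J := by
        intro haJ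
        apply hmN
        have hmem : a • y ∈ (J • ⊤ : Submodule R M) :=
          Submodule.smul_mem_smul haJ Submodule.mem_top
        rw [← hnz]
        exact N.add_mem hn (hJN hmem)
      obtain ⟨b, t, htJ, hbt⟩ := hJmax.exists_inv haJ
      have haym : a • y = m - n := by rw [← hnz]; abel
      have hy1 : y = (b * a) • y + t • y := by
        rw [← add_smul, hbt, one_smul]
      have hyN' : y - b • m ∈ N := by
        have h1 : y - b • m = t • y - b • n := by
          calc y - b • m = (b * a) • y + t • y - b • m := by rw [← hy1]
            _ = b • (a • y) + t • y - b • m := by rw [mul_smul]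
            _ = b • (m - n) + t • y - b • m := by rw [haym]
            _ = t • y - b • n := by rw [smul_sub]; abel
        rw [h1]
        exact N.sub_mem (hJN (Submodule.smul_mem_smul htJ Submodule.mem_top))
          (N.smul_mem b hn)
      have hdecomp : y = (y - b • m) + b • m := by abel
      rw [hdecomp]
      exact Submodule.add_mem _ (Submodule.mem_sup_left hyN')
        (Submodule.mem_sup_right ((R ∙ m).smul_mem b (Submodule.mem_span_singleton_self m)))
  have hco : IsCoatom N := by
    constructor
    · intro h
      exact hmN (h ▸ Submodule.mem_top)
    · intro N' hNN'
      have hmN' : m ∈ N' := by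
        by_contra h
        exact absurd (hNmax.2 ⟨le_trans hJN hNN'.le, h⟩ hNN'.le) (not_le_of_gt hNN')
      rw [eq_top_iff, ← hsup]
      exact sup_le hNN'.le ((Submodule.span_singleton_le_iff_mem m N').2 hmN')
  exact hmN (Submodule.mem_sInf.1 hm N hco)

end Aux

/-- Over a commutative Von Neumann regular ring, a module is Rad-supplementing
iff it is injective. -/
theorem isRadSupplementing_iff_injective_of_vonNeumannRegular
    (R : Type u) [CommRing R] (hvnr : ∀ a : R, ∃ x : R, a = a * x * a)
    (M : Type v) [AddCommGroup M] [Module R M] :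
    IsRadSupplementing R M ↔ Module.Injective R M := by
  constructor
  · intro hrs
    refine ⟨fun X Y _ _ _ _ f hf g => ?_⟩
    -- pushout of f along g
    set φ : X →ₗ[R] M × Y := g.prod (-f) with hφdef
    set W : Submodule R (M × Y) := LinearMap.range φ with hWdef
    set ι : M →ₗ[R] (M × Y) ⧸ W := W.mkQ.comp (LinearMap.inl R M Y) with hιdef
    have hι : Function.Injective ι := by
      rw [← LinearMap.ker_eq_bot, eq_bot_iff]
      intro m hm
      have hmem : (m, (0 : Y)) ∈ W := by
        have : W.mkQ (m, 0) = 0 := hm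
        rwa [Submodule.mkQ_apply, Submodule.Quotient.mk_eq_zero] at this
      obtain ⟨x, hx⟩ := hmem
      have hx2 : -(f x) = (0 : Y) := congrArg Prod.snd hx
      have hx0 : x = 0 := hf (by rw [neg_eq_zero] at hx2; simpa using hx2)
      have hx1 : g x = m := congrArg Prod.fst hx
      rw [Submodule.mem_bot, ← hx1, hx0, map_zero]
    obtain ⟨V, hsup, hint⟩ := hrs (ModuleCat.of R ((M × Y) ⧸ W)) ι hι
    have hrad : moduleRad R V = ⊥ := moduleRad_eq_bot_of_vnr hvnr V
    have hdisj : Disjoint (LinearMap.range ι) V := by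
      rw [disjoint_iff, eq_bot_iff]
      refine le_trans hint ?_
      rw [hrad, Submodule.map_bot]
    have hcompl : IsCompl (LinearMap.range ι) V := ⟨hdisj, codisjoint_iff.2 hsup⟩
    set π0 := Submodule.projectionOnto _ _ hcompl with hπ0def
    set e : M ≃ₗ[R] LinearMap.range ι := LinearEquiv.ofInjective ι hι with hedef
    have hπ : ∀ m : M, e.symm (π0 (ι m)) = m := by
      intro m
      have h1 : π0 (ι m) = e m := by
        have hmem : ι m ∈ LinearMap.range ι := LinearMap.mem_range_self ι m
        rw [show ι m = ((⟨ι m, hmem⟩ : LinearMap.range ι) : (M × Y) ⧸ W) from rfl,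
          Submodule.projectionOnto_apply_left]
        apply Subtype.ext
        simp [hedef]
      rw [h1, LinearEquiv.symm_apply_apply]
    refine ⟨(e.symm.toLinearMap.comp π0).comp (W.mkQ.comp (LinearMap.inr R M Y)), fun x => ?_⟩
    have key : W.mkQ (0, f x) = ι (g x) := by
      rw [hιdef]
      simp only [LinearMap.comp_apply, LinearMap.inl_apply]
      rw [Submodule.mkQ_apply, Submodule.mkQ_apply, Submodule.Quotient.eq]
      have : ((0 : M), f x) - (g x, (0 : Y)) = -(φ x) := by
        simp [hφdef, Prod.ext_iff]
      rw [this]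
      exact W.neg_mem ⟨x, rfl⟩
    simp only [LinearMap.comp_apply, LinearMap.inr_apply]
    rw [key]
    exact hπ (g x)
  · intro hinj N f hf
    obtain ⟨h, hh⟩ := hinj.out f hf LinearMap.id
    refine ⟨LinearMap.ker h, ?_, ?_⟩
    · rw [eq_top_iff]
      intro n _
      have hker : n - f (h n) ∈ LinearMap.ker h := by
        rw [LinearMap.mem_ker, map_sub, hh (h n), LinearMap.id_apply, sub_self]
      have : n = f (h n) + (n - f (h n)) := by abel
      rw [this]
      exact Submodule.add_mem _ (Submodule.mem_sup_left (LinearMap.mem_range_self f (h n)))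
        (Submodule.mem_sup_right hker)
    · intro p hp
      obtain ⟨hpr, hpk⟩ := Submodule.mem_inf.1 hp
      obtain ⟨x, hx⟩ := hpr
      have hx0 : x = 0 := by
        have := hh x
        rw [hx] at this
        rw [LinearMap.mem_ker] at hpk
        rw [hpk] at this
        simpa using this.symm
      have hp0 : p = 0 := by rw [← hx, hx0, map_zero]
      rw [hp0]
      exact Submodule.zero_mem _
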